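/- Discrete charge conservation of the temporal semi-discretization (Proposition 2.1): Let L > 0, Δt > 0, let Q, W : ℝ → ℝ be continuous L-periodic functions, and let u, v : ℝ → ℂ be twice continuously differentiable L-periodic functions satisfying the one-step implicit midpoint relation i·(v(x) − u(x)) = −Δt·(w''(x) + Q(x)·w(x)) + w(x)·W(x) for all x ∈ ℝ, where w = (u + v)/2. Then ∫₀ᴸ |v(x)|² dx = ∫₀ᴸ |u(x)|² dx. -/

import Mathlib

open MeasureTheory Complex ComplexConjugate

/-- Discrete charge conservation of the temporal semi-discretization (Proposition 2.1):
one step of the implicit midpoint scheme for the stochastic linear Schrödinger equation,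
with `L`-periodic data, preserves the charge `∫₀ᴸ |u|²`. -/
theorem midpoint_step_charge_conservation
    (L Δt : ℝ) (hL : 0 < L) (hΔt : 0 < Δt)
    (Q W : ℝ → ℝ) (hQc : Continuous Q) (hWc : Continuous W)
    (hQp : Function.Periodic Q L) (hWp : Function.Periodic W L)
    (u v : ℝ → ℂ) (hu : ContDiff ℝ 2 u) (hv : ContDiff ℝ 2 v)
    (hup : Function.Periodic u L) (hvp : Function.Periodic v L)
    (hstep : ∀ x : ℝ,
      Complex.I * (v x - u x) =
        -(Δt : ℂ) * (deriv (deriv (fun y => (u y + v y) / 2)) x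
            + (Q x : ℂ) * ((u x + v x) / 2))
          + ((u x + v x) / 2) * (W x : ℂ)) :
    ∫ x in (0:ℝ)..L, ‖v x‖ ^ 2
      = ∫ x in (0:ℝ)..L, ‖u x‖ ^ 2 := by
  set w : ℝ → ℂ := fun y => (u y + v y) / 2 with hw_def
  have hw : ContDiff ℝ 2 w := (hu.add hv).div_const 2
  have hwp : Function.Periodic w L := fun x => by simp [hw_def, hup x, hvp x]
  -- regularity of derivatives
  have hw1 : ContDiff ℝ 1 (deriv w) := by
    have := (contDiff_succ_iff_deriv (n := 1)).mp (by norm_num at hw ⊢; exact hw)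
    exact this.2.2
  have hdw : Differentiable ℝ w := hw.differentiable (by norm_num)
  have hdw1 : Differentiable ℝ (deriv w) := hw1.differentiable (by norm_num)
  have hcw2 : Continuous (deriv (deriv w)) := hw1.continuous_deriv le_rfl
  -- the key pointwise identity
  have key : ∀ x, Complex.normSq (v x) - Complex.normSq (u x)
      = (-(2*Δt)) * ((starRingEnd ℂ) (w x) * deriv (deriv w) x).im := by
    intro x
    have h := hstep x
    have hre := congrArg Complex.re h
    have him := congrArg Complex.im h
    have hmre : (w x).re = ((u x).re + (v x).re) / 2 := by
      simp [hw_def, Complex.div_ofNat_re]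
    have hmim : (w x).im = ((u x).im + (v x).im) / 2 := by
      simp [hw_def, Complex.div_ofNat_im]
    simp only [Complex.mul_re, Complex.mul_im, Complex.add_re, Complex.add_im,
      Complex.sub_re, Complex.sub_im, Complex.neg_re, Complex.neg_im,
      Complex.I_re, Complex.I_im, Complex.ofReal_re, Complex.ofReal_im,
      Complex.normSq_apply, RCLike.star_def, Complex.conj_re, Complex.conj_im,
      Complex.div_ofNat_re, Complex.div_ofNat_im, hmre, hmim] at hre him ⊢
    linear_combination ((u x).re + (v x).re) * him - ((u x).im + (v x).im) * hre
  -- the function whose derivative appears on the right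
  have hgderiv : ∀ x, HasDerivAt (fun y => ((starRingEnd ℂ) (w y) * deriv w y).im)
      (((starRingEnd ℂ) (w x) * deriv (deriv w) x).im) x := by
    intro x
    have h1 : HasDerivAt (fun y => (starRingEnd ℂ) (w y)) ((starRingEnd ℂ) (deriv w x)) x := by
      simpa [Complex.star_def] using (hdw x).hasDerivAt.star
    have h2 : HasDerivAt (deriv w) (deriv (deriv w) x) x := (hdw1 x).hasDerivAt
    have h3 := h1.mul h2
    have h4 := (Complex.imCLM.hasFDerivAt (x := (starRingEnd ℂ) (w x) * deriv w x)).comp_hasDerivAt x h3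
    have e : ((starRingEnd ℂ) (deriv w x) * deriv w x + (starRingEnd ℂ) (w x) * deriv (deriv w) x).im
        = ((starRingEnd ℂ) (w x) * deriv (deriv w) x).im := by
      rw [← Complex.normSq_eq_conj_mul_self]
      simp
    exact e ▸ h4
  have hint : (∫ x in (0:ℝ)..L, ((starRingEnd ℂ) (w x) * deriv (deriv w) x).im) = 0 := by
    have hcont : Continuous (fun x => ((starRingEnd ℂ) (w x) * deriv (deriv w) x).im) :=
      Complex.continuous_im.comp ((Complex.continuous_conj.comp hw.continuous).mul hcw2)
    rw [intervalIntegral.integral_eq_sub_of_hasDerivAt (fun x _ => hgderiv x)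
      (hcont.intervalIntegrable 0 L)]
    have hwL : w L = w 0 := by simpa using hwp 0
    have hdwL : deriv w L = deriv w 0 := by
      have : deriv (fun y => w (y + L)) 0 = deriv w (0 + L) := deriv_comp_add_const w L 0
      simp only [zero_add] at this
      rw [← this]
      congr 1
      funext y
      exact hwp y
    rw [hwL, hdwL, sub_self]
  have hiu : IntervalIntegrable (fun x => Complex.normSq (u x)) volume 0 L :=
    (Complex.continuous_normSq.comp hu.continuous).intervalIntegrable 0 L
  have hiv : IntervalIntegrable (fun x => Complex.normSq (v x)) volume 0 L :=
    (Complex.continuous_normSq.comp hv.continuous).intervalIntegrable 0 L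
  have hsub : (∫ x in (0:ℝ)..L, (Complex.normSq (v x) - Complex.normSq (u x))) = 0 := by
    calc (∫ x in (0:ℝ)..L, (Complex.normSq (v x) - Complex.normSq (u x)))
        = ∫ x in (0:ℝ)..L, (-(2*Δt)) * ((starRingEnd ℂ) (w x) * deriv (deriv w) x).im := by
          apply intervalIntegral.integral_congr; intro x _; exact key x
      _ = (-(2*Δt)) * ∫ x in (0:ℝ)..L, ((starRingEnd ℂ) (w x) * deriv (deriv w) x).im :=
          intervalIntegral.integral_const_mul _ _
      _ = 0 := by rw [hint, mul_zero]
  have := intervalIntegral.integral_sub hiv hiu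
  simp only [Complex.sq_norm]
  rw [this] at hsub
  linarith
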